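/- Let d ≥ 3 be an integer. There is a constant C < ∞ depending only on d such that, for every t > 0 and every x ∈ ℝ^d, (G_t * log|·|^{-1})(x) ≥ −(1/2)·log t − C·(1 + |x|/t^{1/2}). -/

import Mathlib

open MeasureTheory Real

/-- The standard `d`-dimensional heat kernel `G_t(x) = (2πt)^{-d/2} exp(-|x|²/(2t))`. -/
noncomputable def heatKernel (d : ℕ) (t : ℝ) (x : EuclideanSpace ℝ (Fin d)) : ℝ :=
  (2 * π * t) ^ (-(d : ℝ) / 2) * Real.exp (-‖x‖ ^ 2 / (2 * t))

lemma gauss_integrable (d : ℕ) {b : ℝ} (hb : 0 < b) :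
    Integrable (fun v : EuclideanSpace ℝ (Fin d) => rexp (-b * ‖v‖^2)) := by
  have h := (GaussianFourier.integrable_cexp_neg_mul_sq_norm_add (b := (b : ℂ))
    (by simpa using hb) 0 (0 : EuclideanSpace ℝ (Fin d))).norm
  convert h using 2 with v
  simp [Complex.norm_exp]
  left; norm_cast

lemma norm_le_sqrt_exp {b s : ℝ} (hb : 0 < b) (hs : 0 ≤ s) :
    rexp (-b * s^2) * s ≤ Real.sqrt (2/b) * rexp (-(b/2) * s^2) := by
  have h1 : b * s^2 / 2 ≤ rexp (b * s^2 / 2) := (Real.add_one_le_exp _).trans' (by linarith)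
  have h2 : s ≤ Real.sqrt (2/b) * rexp (b * s^2 / 4) := by
    have h3 : s^2 ≤ (2/b) * rexp (b * s^2 / 2) := by
      rw [← sub_nonneg] at h1 ⊢
      have : (2/b) * rexp (b * s^2 / 2) - s^2 = (2/b) * (rexp (b * s^2 / 2) - b * s^2/2) := by
        field_simp
      rw [this]
      positivity
    calc s = Real.sqrt (s^2) := (Real.sqrt_sq hs).symm
    _ ≤ Real.sqrt ((2/b) * rexp (b * s^2 / 2)) := Real.sqrt_le_sqrt h3
    _ = Real.sqrt (2/b) * rexp (b * s^2 / 4) := by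
        rw [Real.sqrt_mul (by positivity), ← Real.exp_half]
        ring_nf
  calc rexp (-b * s^2) * s ≤ rexp (-b * s^2) * (Real.sqrt (2/b) * rexp (b * s^2 / 4)) :=
        mul_le_mul_of_nonneg_left h2 (exp_pos _).le
  _ = Real.sqrt (2/b) * rexp (-b * s^2 + b * s^2 / 4) := by rw [Real.exp_add]; ring
  _ ≤ Real.sqrt (2/b) * rexp (-(b/2) * s^2) :=
      mul_le_mul_of_nonneg_left (Real.exp_le_exp.2 (by nlinarith)) (Real.sqrt_nonneg _)

lemma gauss_norm_integrable (d : ℕ) {b : ℝ} (hb : 0 < b) :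
    Integrable (fun v : EuclideanSpace ℝ (Fin d) => rexp (-b * ‖v‖^2) * ‖v‖) := by
  refine Integrable.mono' ((gauss_integrable d (by positivity : 0 < b/2)).const_mul
    (Real.sqrt (2/b))) ?_ ?_
  · exact ((measurable_norm.pow_const 2).const_mul (-b)).exp.mul measurable_norm
      |>.aestronglyMeasurable
  · filter_upwards with v
    rw [Real.norm_eq_abs, abs_of_nonneg (by positivity)]
    exact norm_le_sqrt_exp hb (norm_nonneg v)

lemma gauss_norm_integral_le (d : ℕ) {b : ℝ} (hb : 0 < b) :
    ∫ v : EuclideanSpace ℝ (Fin d), rexp (-b * ‖v‖^2) * ‖v‖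
      ≤ Real.sqrt (2/b) * (π/(b/2))^((d:ℝ)/2) := by
  have h := integral_mono (gauss_norm_integrable d hb)
    (((gauss_integrable d (by positivity : 0 < b/2)).const_mul (Real.sqrt (2/b))))
    (fun v => norm_le_sqrt_exp hb (norm_nonneg v))
  rw [integral_const_mul, GaussianFourier.integral_rexp_neg_mul_sq_norm (by positivity),
    finrank_euclideanSpace_fin] at h
  exact h



lemma heatKernel_eq (d : ℕ) {t : ℝ} (ht : 0 < t) (x : EuclideanSpace ℝ (Fin d)) :
    heatKernel d t x = (2 * π * t) ^ (-(d : ℝ) / 2) * rexp (-(1/(2*t)) * ‖x‖^2) := by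
  rw [heatKernel]
  congr 1
  rw [neg_div, neg_mul]
  congr 1
  field_simp

lemma heatKernel_nonneg (d : ℕ) {t : ℝ} (ht : 0 < t) (x : EuclideanSpace ℝ (Fin d)) :
    0 ≤ heatKernel d t x := by
  unfold heatKernel; positivity

lemma heatKernel_integrable (d : ℕ) {t : ℝ} (ht : 0 < t) :
    Integrable (fun x : EuclideanSpace ℝ (Fin d) => heatKernel d t x) := by
  have : 0 < 1/(2*t) := by positivity
  have h := (gauss_integrable d this).const_mul ((2 * π * t) ^ (-(d : ℝ) / 2))
  refine h.congr (Filter.Eventually.of_forall fun x => ?_)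
  exact (heatKernel_eq d ht x).symm

lemma heatKernel_integral (d : ℕ) {t : ℝ} (ht : 0 < t) :
    ∫ x : EuclideanSpace ℝ (Fin d), heatKernel d t x = 1 := by
  have h2πt : (0:ℝ) < 2 * π * t := by positivity
  calc ∫ x : EuclideanSpace ℝ (Fin d), heatKernel d t x
      = (2 * π * t) ^ (-(d : ℝ) / 2) *
        ∫ x : EuclideanSpace ℝ (Fin d), rexp (-(1/(2*t)) * ‖x‖^2) := by
        rw [← integral_const_mul]
        exact integral_congr_ae (Filter.Eventually.of_forall fun x => heatKernel_eq d ht x)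
  _ = (2 * π * t) ^ (-(d : ℝ) / 2) * (2 * π * t) ^ ((d : ℝ) / 2) := by
        rw [GaussianFourier.integral_rexp_neg_mul_sq_norm (by positivity),
          finrank_euclideanSpace_fin]
        congr 2
        field_simp
  _ = 1 := by
        rw [← Real.rpow_add h2πt]
        have : -(d:ℝ)/2 + (d:ℝ)/2 = 0 := by ring
        rw [this, Real.rpow_zero]
lemma heatKernel_norm_integrable (d : ℕ) {t : ℝ} (ht : 0 < t) :
    Integrable (fun x : EuclideanSpace ℝ (Fin d) => heatKernel d t x * ‖x‖) := by
  have h := (gauss_norm_integrable d (by positivity : (0:ℝ) < 1/(2*t))).const_mul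
    ((2 * π * t) ^ (-(d : ℝ) / 2))
  refine h.congr (Filter.Eventually.of_forall fun x => ?_)
  simp only [heatKernel_eq d ht]; ring

lemma heatKernel_norm_integral_le (d : ℕ) {t : ℝ} (ht : 0 < t) :
    ∫ x : EuclideanSpace ℝ (Fin d), heatKernel d t x * ‖x‖
      ≤ 2 ^ ((d:ℝ)/2 + 1) * Real.sqrt t := by
  have hb : (0:ℝ) < 1/(2*t) := by positivity
  have h2πt : (0:ℝ) < 2 * π * t := by positivity
  have key : ∫ x : EuclideanSpace ℝ (Fin d), heatKernel d t x * ‖x‖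
      = (2 * π * t) ^ (-(d : ℝ) / 2) *
        ∫ x : EuclideanSpace ℝ (Fin d), rexp (-(1/(2*t)) * ‖x‖^2) * ‖x‖ := by
    rw [← integral_const_mul]
    refine integral_congr_ae (Filter.Eventually.of_forall fun x => ?_)
    simp only [heatKernel_eq d ht]; ring
  rw [key]
  have hle := gauss_norm_integral_le d hb
  have hA : (0:ℝ) ≤ (2 * π * t) ^ (-(d : ℝ) / 2) := (Real.rpow_pos_of_pos h2πt _).le
  calc (2 * π * t) ^ (-(d : ℝ) / 2) *
        ∫ x : EuclideanSpace ℝ (Fin d), rexp (-(1/(2*t)) * ‖x‖^2) * ‖x‖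
      ≤ (2 * π * t) ^ (-(d : ℝ) / 2) *
        (Real.sqrt (2/(1/(2*t))) * (π/((1/(2*t))/2))^((d:ℝ)/2)) :=
        mul_le_mul_of_nonneg_left hle hA
  _ = 2 ^ ((d:ℝ)/2 + 1) * Real.sqrt t := by
      have e1 : 2/(1/(2*t)) = 4*t := by field_simp; ring
      have e2 : π/((1/(2*t))/2) = 4*π*t := by field_simp; ring
      have e3 : Real.sqrt (4*t) = 2 * Real.sqrt t := by
        rw [show (4:ℝ)*t = 2^2*t by norm_num, Real.sqrt_mul (by positivity),
          Real.sqrt_sq (by norm_num : (0:ℝ) ≤ 2)]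
      have e4 : ((4:ℝ)*π*t)^((d:ℝ)/2) = 2^((d:ℝ)/2) * (2*π*t)^((d:ℝ)/2) := by
        rw [← Real.mul_rpow (by norm_num) h2πt.le]
        congr 1; ring
      have e5 : (2*π*t) ^ (-(d:ℝ)/2) * (2*π*t) ^ ((d:ℝ)/2) = 1 := by
        rw [← Real.rpow_add h2πt, show -(d:ℝ)/2 + (d:ℝ)/2 = 0 by ring, Real.rpow_zero]
      have e6 : (2:ℝ) ^ ((d:ℝ)/2 + 1) = 2^((d:ℝ)/2) * 2 := by
        rw [Real.rpow_add (by norm_num : (0:ℝ) < 2), Real.rpow_one]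
      rw [e1, e2, e3, e4, e6]
      calc (2*π*t) ^ (-(d:ℝ)/2) * (2 * Real.sqrt t * (2^((d:ℝ)/2) * (2*π*t)^((d:ℝ)/2)))
          = (2^((d:ℝ)/2) * 2 * Real.sqrt t) * ((2*π*t) ^ (-(d:ℝ)/2) * (2*π*t)^((d:ℝ)/2)) := by
            ring
      _ = 2^((d:ℝ)/2) * 2 * Real.sqrt t := by rw [e5, mul_one]
lemma logplus_integrable (d : ℕ) (hd : 1 ≤ d) :
    Integrable (fun y : EuclideanSpace ℝ (Fin d) => max (Real.log (1/‖y‖)) 0) := by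
  haveI : Nonempty (Fin d) := ⟨⟨0, by omega⟩⟩
  have hmeas : Measurable (fun y : EuclideanSpace ℝ (Fin d) => max (Real.log (1/‖y‖)) 0) :=
    (Real.measurable_log.comp (measurable_const.div measurable_norm)).max measurable_const
  have hnn : 0 ≤ᵐ[volume] (fun y : EuclideanSpace ℝ (Fin d) => max (Real.log (1/‖y‖)) 0) :=
    Filter.Eventually.of_forall fun y => le_max_right _ _
  refine ⟨hmeas.aestronglyMeasurable, ?_⟩
  rw [hasFiniteIntegral_iff_ofReal hnn,
    lintegral_eq_lintegral_meas_lt volume hnn hmeas.aemeasurable]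
  have hset : ∀ s ∈ Set.Ioi (0:ℝ),
      volume {y : EuclideanSpace ℝ (Fin d) | s < max (Real.log (1/‖y‖)) 0}
        = ENNReal.ofReal (rexp (-(d:ℝ) * s)) * volume (Metric.ball (0:EuclideanSpace ℝ (Fin d)) 1) := by
    intro s hs
    rw [Set.mem_Ioi] at hs
    have hseteq : {y : EuclideanSpace ℝ (Fin d) | s < max (Real.log (1/‖y‖)) 0}
        = Metric.ball (0:EuclideanSpace ℝ (Fin d)) (rexp (-s)) \ {0} := by
      ext y
      simp only [Set.mem_setOf_eq, Set.mem_diff, Metric.mem_ball, dist_zero_right,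
        Set.mem_singleton_iff]
      constructor
      · intro h
        have hlog : s < Real.log (1/‖y‖) := by
          rcases max_cases (Real.log (1/‖y‖)) 0 with ⟨h1, _⟩ | ⟨h1, h2⟩
          · rwa [h1] at h
          · rw [h1] at h; linarith
        have hy0 : y ≠ 0 := by
          intro h0
          rw [h0] at hlog
          simp at hlog
          linarith
        have hy : (0:ℝ) < ‖y‖ := norm_pos_iff.mpr hy0
        rw [one_div] at hlog
        have h2 : rexp s < ‖y‖⁻¹ := (Real.lt_log_iff_exp_lt (by positivity)).mp hlog
        refine ⟨?_, hy0⟩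
        rw [Real.exp_neg]
        calc ‖y‖ = (‖y‖⁻¹)⁻¹ := (inv_inv _).symm
        _ < (rexp s)⁻¹ := by
            exact inv_strictAnti₀ (Real.exp_pos s) h2
      · rintro ⟨hlt, hy0⟩
        have hy : (0:ℝ) < ‖y‖ := norm_pos_iff.mpr hy0
        have : Real.log ‖y‖ < -s := by
          calc Real.log ‖y‖ < Real.log (rexp (-s)) := Real.log_lt_log hy hlt
          _ = -s := Real.log_exp _
        refine lt_max_iff.mpr (Or.inl ?_)
        rw [one_div, Real.log_inv]
        linarith
    rw [hseteq, measure_diff_null (measure_singleton _),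
      Measure.addHaar_ball _ _ (Real.exp_pos _).le, finrank_euclideanSpace_fin,
      ← Real.exp_nat_mul]
    congr 3
    ring
  rw [setLIntegral_congr_fun measurableSet_Ioi hset]
  have hf : Measurable fun s : ℝ => ENNReal.ofReal (rexp (-(d:ℝ) * s)) :=
    (Real.measurable_exp.comp (measurable_id.const_mul _)).ennreal_ofReal
  rw [lintegral_mul_const'' _ hf.aemeasurable.restrict]
  exact ENNReal.mul_lt_top
    ((exp_neg_integrableOn_Ioi 0 (by exact_mod_cast Nat.pos_of_ne_zero (by omega) : (0:ℝ) < d)).lintegral_lt_top)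
    measure_ball_lt_top
lemma heatKernel_continuous_aux (d : ℕ) (t : ℝ) (x : EuclideanSpace ℝ (Fin d)) :
    Continuous (fun y : EuclideanSpace ℝ (Fin d) => heatKernel d t (x - y)) := by
  unfold heatKernel
  exact continuous_const.mul (Real.continuous_exp.comp
    ((((continuous_norm.comp (continuous_const.sub continuous_id)).pow 2).neg).div_const _))
lemma heatKernel_le (d : ℕ) {t : ℝ} (ht : 0 < t) (z : EuclideanSpace ℝ (Fin d)) :
    heatKernel d t z ≤ (2 * π * t) ^ (-(d : ℝ) / 2) := by
  rw [heatKernel]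
  have h1 : rexp (-‖z‖ ^ 2 / (2 * t)) ≤ 1 := by
    rw [Real.exp_le_one_iff]
    have : (0:ℝ) < 2 * t := by positivity
    apply div_nonpos_of_nonpos_of_nonneg
    · simp [sq_nonneg]
    · positivity
  have hA : (0:ℝ) ≤ (2 * π * t) ^ (-(d : ℝ) / 2) :=
    (Real.rpow_pos_of_pos (by positivity) _).le
  calc (2 * π * t) ^ (-(d : ℝ) / 2) * rexp (-‖z‖ ^ 2 / (2 * t))
      ≤ (2 * π * t) ^ (-(d : ℝ) / 2) * 1 := mul_le_mul_of_nonneg_left h1 hA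
  _ = _ := mul_one _

lemma shifted_heatKernel_integrable (d : ℕ) {t : ℝ} (ht : 0 < t) (x : EuclideanSpace ℝ (Fin d)) :
    Integrable (fun y : EuclideanSpace ℝ (Fin d) => heatKernel d t (x - y)) :=
  (heatKernel_integrable d ht).comp_sub_left x

lemma shifted_heatKernel_norm_integrable (d : ℕ) {t : ℝ} (ht : 0 < t)
    (x : EuclideanSpace ℝ (Fin d)) :
    Integrable (fun y : EuclideanSpace ℝ (Fin d) => heatKernel d t (x - y) * ‖x - y‖) :=
  (heatKernel_norm_integrable d ht).comp_sub_left x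

lemma shifted_dom_integrable (d : ℕ) {t : ℝ} (ht : 0 < t) (x : EuclideanSpace ℝ (Fin d)) :
    Integrable (fun y : EuclideanSpace ℝ (Fin d) =>
      heatKernel d t (x - y) * (‖x - y‖ + ‖x‖)) := by
  have h := (shifted_heatKernel_norm_integrable d ht x).add
    ((shifted_heatKernel_integrable d ht x).mul_const ‖x‖)
  refine h.congr (Filter.Eventually.of_forall fun y => ?_)
  simp only [Pi.add_apply]
  ring

lemma norm_le_shift (x y : EuclideanSpace ℝ (Fin d)) : ‖y‖ ≤ ‖x - y‖ + ‖x‖ := by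
  have := norm_sub_norm_le y x
  have h2 : ‖y - x‖ = ‖x - y‖ := norm_sub_rev y x
  linarith

lemma shifted_mul_norm_integrable (d : ℕ) {t : ℝ} (ht : 0 < t) (x : EuclideanSpace ℝ (Fin d)) :
    Integrable (fun y : EuclideanSpace ℝ (Fin d) => heatKernel d t (x - y) * ‖y‖) := by
  refine Integrable.mono' (shifted_dom_integrable d ht x) ?_ ?_
  · apply Measurable.aestronglyMeasurable
    apply Measurable.mul ?_ measurable_norm
    exact (heatKernel_continuous_aux d t x).measurable
  · filter_upwards with y
    rw [Real.norm_eq_abs, abs_of_nonneg (by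
      exact mul_nonneg (heatKernel_nonneg d ht _) (norm_nonneg _))]
    exact mul_le_mul_of_nonneg_left (norm_le_shift x y) (heatKernel_nonneg d ht _)
lemma shifted_heatKernel_integral (d : ℕ) {t : ℝ} (ht : 0 < t) (x : EuclideanSpace ℝ (Fin d)) :
    ∫ y : EuclideanSpace ℝ (Fin d), heatKernel d t (x - y) = 1 := by
  rw [integral_sub_left_eq_self (fun z => heatKernel d t z) volume x]
  exact heatKernel_integral d ht

lemma shifted_moment_le (d : ℕ) {t : ℝ} (ht : 0 < t) (x : EuclideanSpace ℝ (Fin d)) :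
    ∫ y : EuclideanSpace ℝ (Fin d), heatKernel d t (x - y) * ‖y‖
      ≤ ‖x‖ + 2 ^ ((d:ℝ)/2 + 1) * Real.sqrt t := by
  have hmono := integral_mono (shifted_mul_norm_integrable d ht x)
    (shifted_dom_integrable d ht x) (fun y =>
      mul_le_mul_of_nonneg_left (norm_le_shift x y) (heatKernel_nonneg d ht _))
  have hsplit : ∫ y : EuclideanSpace ℝ (Fin d), heatKernel d t (x - y) * (‖x - y‖ + ‖x‖)
      = (∫ y : EuclideanSpace ℝ (Fin d), heatKernel d t (x - y) * ‖x - y‖)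
        + (∫ y : EuclideanSpace ℝ (Fin d), heatKernel d t (x - y)) * ‖x‖ := by
    rw [← integral_mul_const]
    rw [← integral_add (shifted_heatKernel_norm_integrable d ht x)
      ((shifted_heatKernel_integrable d ht x).mul_const ‖x‖)]
    congr 1; ext y; ring
  have htrans : ∫ y : EuclideanSpace ℝ (Fin d), heatKernel d t (x - y) * ‖x - y‖
      = ∫ z : EuclideanSpace ℝ (Fin d), heatKernel d t z * ‖z‖ :=
    integral_sub_left_eq_self (fun z => heatKernel d t z * ‖z‖) volume x
  rw [hsplit, htrans, shifted_heatKernel_integral d ht x, one_mul] at hmono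
  have := heatKernel_norm_integral_le d ht
  linarith

lemma main_integrable (d : ℕ) (hd : 1 ≤ d) {t : ℝ} (ht : 0 < t)
    (x : EuclideanSpace ℝ (Fin d)) :
    Integrable (fun y : EuclideanSpace ℝ (Fin d) =>
      heatKernel d t (x - y) * Real.log (1/‖y‖)) := by
  set A := (2 * π * t) ^ (-(d : ℝ) / 2) with hA
  have hA0 : 0 < A := Real.rpow_pos_of_pos (by positivity) _
  have hdom : Integrable (fun y : EuclideanSpace ℝ (Fin d) =>
      A * max (Real.log (1/‖y‖)) 0 + heatKernel d t (x - y) * (‖x - y‖ + ‖x‖)) :=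
    ((logplus_integrable d hd).const_mul A).add (shifted_dom_integrable d ht x)
  refine Integrable.mono' hdom ?_ ?_
  · exact ((heatKernel_continuous_aux d t x).measurable.mul
      (Real.measurable_log.comp (measurable_const.div measurable_norm))).aestronglyMeasurable
  · filter_upwards with y
    have hG0 : 0 ≤ heatKernel d t (x - y) := heatKernel_nonneg d ht _
    have hGA : heatKernel d t (x - y) ≤ A := heatKernel_le d ht _
    rw [Real.norm_eq_abs, abs_mul, abs_of_nonneg hG0]
    rcases le_or_gt ‖y‖ 1 with hy | hy
    · have hL0 : 0 ≤ Real.log (1/‖y‖) := by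
        rcases eq_or_ne y 0 with rfl | hy0
        · simp
        · apply Real.log_nonneg
          rw [le_one_div (by positivity) (norm_pos_iff.mpr hy0)]
          simpa using hy
      have h1 : heatKernel d t (x - y) * |Real.log (1/‖y‖)|
          ≤ A * max (Real.log (1/‖y‖)) 0 := by
        rw [abs_of_nonneg hL0]
        exact mul_le_mul hGA (le_max_left _ _) hL0 hA0.le
      have h2 : 0 ≤ heatKernel d t (x - y) * (‖x - y‖ + ‖x‖) := by positivity
      linarith
    · have hy0 : (0:ℝ) < ‖y‖ := lt_trans one_pos hy
      have hL : |Real.log (1/‖y‖)| = Real.log ‖y‖ := by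
        rw [one_div, Real.log_inv, abs_neg, abs_of_nonneg (Real.log_nonneg hy.le)]
      have hlog : Real.log ‖y‖ ≤ ‖x - y‖ + ‖x‖ := by
        have := Real.log_le_sub_one_of_pos hy0
        have := norm_le_shift x y
        linarith
      have h1 : heatKernel d t (x - y) * |Real.log (1/‖y‖)|
          ≤ heatKernel d t (x - y) * (‖x - y‖ + ‖x‖) := by
        rw [hL]
        exact mul_le_mul_of_nonneg_left hlog hG0
      have h2 : 0 ≤ A * max (Real.log (1/‖y‖)) 0 := by positivity
      linarith

/-- For `d ≥ 3` there is `C = C(d)` such that for all `t > 0` and all `x ∈ ℝ^d`,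
`(G_t * log|·|^{-1})(x) ≥ -(1/2) log t - C(1 + |x|/√t)`. -/
theorem heat_conv_log_lower_bound (d : ℕ) (hd : 3 ≤ d) :
    ∃ C : ℝ, ∀ t : ℝ, 0 < t → ∀ x : EuclideanSpace ℝ (Fin d),
      -(1 / 2) * Real.log t - C * (1 + ‖x‖ / Real.sqrt t) ≤
        ∫ y : EuclideanSpace ℝ (Fin d), heatKernel d t (x - y) * Real.log (1 / ‖y‖) := by
  refine ⟨(2:ℝ) ^ ((d:ℝ)/2 + 1), fun t ht x => ?_⟩
  haveI : Nonempty (Fin d) := ⟨⟨0, by omega⟩⟩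
  haveI : Nontrivial (EuclideanSpace ℝ (Fin d)) := inferInstance
  set C : ℝ := (2:ℝ) ^ ((d:ℝ)/2 + 1) with hCdef
  have hC1 : (1:ℝ) ≤ C := Real.one_le_rpow (by norm_num) (by positivity)
  have hst : 0 < Real.sqrt t := Real.sqrt_pos.mpr ht
  have h0 : ∀ᵐ y : EuclideanSpace ℝ (Fin d), y ≠ 0 := by
    rw [ae_iff]
    have hs : {y : EuclideanSpace ℝ (Fin d) | ¬ y ≠ 0} = {(0:EuclideanSpace ℝ (Fin d))} := by
      ext y; simp
    rw [hs]
    exact measure_singleton 0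
  have hg_int : Integrable (fun y : EuclideanSpace ℝ (Fin d) =>
      heatKernel d t (x - y) * (-(1/2) * Real.log t - ‖y‖ / Real.sqrt t)) := by
    have h := ((shifted_heatKernel_integrable d ht x).const_mul (-(1/2) * Real.log t)).add
      ((shifted_mul_norm_integrable d ht x).const_mul (-(1/Real.sqrt t)))
    refine h.congr (Filter.Eventually.of_forall fun y => ?_)
    simp only [Pi.add_apply]
    ring
  have hf_int := main_integrable d (by omega) ht x
  have hae : (fun y : EuclideanSpace ℝ (Fin d) =>
        heatKernel d t (x - y) * (-(1/2) * Real.log t - ‖y‖ / Real.sqrt t))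
      ≤ᵐ[volume] (fun y : EuclideanSpace ℝ (Fin d) =>
        heatKernel d t (x - y) * Real.log (1 / ‖y‖)) := by
    filter_upwards [h0] with y hy
    refine mul_le_mul_of_nonneg_left ?_ (heatKernel_nonneg d ht _)
    have hny : (0:ℝ) < ‖y‖ := norm_pos_iff.mpr hy
    rw [one_div ‖y‖, Real.log_inv]
    have hkey : Real.log ‖y‖ ≤ 1/2 * Real.log t + ‖y‖ / Real.sqrt t := by
      have hmul : Real.sqrt t * (‖y‖ / Real.sqrt t) = ‖y‖ := by field_simp
      have heq : Real.log ‖y‖ = Real.log (Real.sqrt t) + Real.log (‖y‖ / Real.sqrt t) := by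
        conv_lhs => rw [← hmul]
        rw [Real.log_mul hst.ne' (by positivity : (0:ℝ) < ‖y‖ / Real.sqrt t).ne']
      have hlog2 : Real.log (‖y‖ / Real.sqrt t) ≤ ‖y‖ / Real.sqrt t := by
        have := Real.log_le_sub_one_of_pos (show (0:ℝ) < ‖y‖ / Real.sqrt t by positivity)
        linarith
      have hhalf : Real.log (Real.sqrt t) = Real.log t / 2 := Real.log_sqrt ht.le
      rw [heq, hhalf]; linarith
    linarith
  have hmono := integral_mono_ae hg_int hf_int hae
  have hsplit : ∫ y : EuclideanSpace ℝ (Fin d),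
      heatKernel d t (x - y) * (-(1/2) * Real.log t - ‖y‖ / Real.sqrt t)
      = (-(1/2) * Real.log t) * (∫ y : EuclideanSpace ℝ (Fin d), heatKernel d t (x - y))
        + (-(1/Real.sqrt t)) *
          (∫ y : EuclideanSpace ℝ (Fin d), heatKernel d t (x - y) * ‖y‖) := by
    rw [← integral_const_mul, ← integral_const_mul,
      ← integral_add ((shifted_heatKernel_integrable d ht x).const_mul _)
        ((shifted_mul_norm_integrable d ht x).const_mul _)]
    refine integral_congr_ae (Filter.Eventually.of_forall fun y => ?_)
    ring
  rw [hsplit, shifted_heatKernel_integral d ht x, mul_one] at hmono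
  set I : ℝ := ∫ y : EuclideanSpace ℝ (Fin d), heatKernel d t (x - y) * ‖y‖ with hI
  have hI_le : I ≤ ‖x‖ + C * Real.sqrt t := shifted_moment_le d ht x
  have e1 : (1/Real.sqrt t) * I ≤ (1/Real.sqrt t) * (‖x‖ + C * Real.sqrt t) :=
    mul_le_mul_of_nonneg_left hI_le (by positivity)
  have e2 : (1/Real.sqrt t) * (‖x‖ + C * Real.sqrt t) = ‖x‖ / Real.sqrt t + C := by
    field_simp
  have e3 : ‖x‖ / Real.sqrt t ≤ C * (‖x‖ / Real.sqrt t) :=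
    le_mul_of_one_le_left (by positivity) hC1
  have e4 : C * (1 + ‖x‖ / Real.sqrt t) = C + C * (‖x‖ / Real.sqrt t) := by ring
  linarith
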